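/- Let G be a tight graph with set T of dense vertices and let c be a tight b-colouring of G. Then every vertex u of T that dominates G[T] (i.e., is adjacent to all other vertices of T) lies in a colour class containing no vertex of the outer boundary δT of T. -/

import Mathlib

open SimpleGraph

/-- A proper colouring of `G` given as a function to `ℕ`. -/
def IsProperColoring {V : Type*} (G : SimpleGraph V) (c : V → ℕ) : Prop :=
  ∀ u v, G.Adj u v → c u ≠ c v

/-- A vertex `v` is b-chromatic under `c`: it has a neighbour of every used colour
other than its own. -/
def IsBVertex {V : Type*} (G : SimpleGraph V) (c : V → ℕ) (v : V) : Prop :=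
  ∀ j ∈ Set.range c, j ≠ c v → ∃ u, G.Adj v u ∧ c u = j

/-- A b-colouring: a proper colouring in which every colour class contains a
b-chromatic vertex. -/
def IsBColoring {V : Type*} (G : SimpleGraph V) (c : V → ℕ) : Prop :=
  IsProperColoring G c ∧ ∀ j ∈ Set.range c, ∃ v, c v = j ∧ IsBVertex G c v

/-- The number of colours used by a colouring. -/
noncomputable def numColors {V : Type*} (c : V → ℕ) : ℕ := (Set.range c).ncard

/-- The b-chromatic number: the maximum number of colours in a b-colouring. -/
noncomputable def bChromaticNumber {V : Type*} (G : SimpleGraph V) : ℕ :=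
  sSup {k | ∃ c, IsBColoring G c ∧ numColors c = k}

/-- The m-degree `m(G)`: the largest `k` such that `G` has at least `k` vertices of
degree at least `k - 1`. -/
noncomputable def mDegree {V : Type*} (G : SimpleGraph V) : ℕ :=
  sSup {k | k ≤ {v : V | k ≤ (G.neighborSet v).ncard + 1}.ncard}

/-- The set of dense vertices: those of degree at least `m(G) - 1`. -/
def denseSet {V : Type*} (G : SimpleGraph V) : Set V :=
  {v | mDegree G ≤ (G.neighborSet v).ncard + 1}

/-- A graph is tight if it has exactly `m(G)` dense vertices, each of degree
exactly `m(G) - 1`. -/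
def IsTight {V : Type*} (G : SimpleGraph V) : Prop :=
  (denseSet G).ncard = mDegree G ∧
    ∀ v ∈ denseSet G, (G.neighborSet v).ncard = mDegree G - 1

/-- A fall colouring: a proper colouring in which every vertex has a neighbour of
every used colour other than its own. -/
def IsFallColoring {V : Type*} (G : SimpleGraph V) (c : V → ℕ) : Prop :=
  IsProperColoring G c ∧ ∀ v, ∀ j ∈ Set.range c, j ≠ c v → ∃ u, G.Adj v u ∧ c u = j

/-- The fall spectrum: the set of numbers of colours of fall colourings of `G`. -/
def fallSpectrum {V : Type*} (G : SimpleGraph V) : Set ℕ :=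
  {k | ∃ c, IsFallColoring G c ∧ numColors c = k}

/-- The outer boundary of a vertex set: vertices outside it with a neighbour in it. -/
def outerBoundary {V : Type*} (G : SimpleGraph V) (T : Set V) : Set V :=
  {s | s ∉ T ∧ ∃ t ∈ T, G.Adj s t}

theorem stmt10 {V : Type*} [Fintype V] (G : SimpleGraph V) (ht : IsTight G)
    (c : V → ℕ) (hb : IsBColoring G c) (hm : numColors c = mDegree G)
    (u : V) (hu : u ∈ denseSet G)
    (hdom : ∀ w ∈ denseSet G, w ≠ u → G.Adj u w) :
    ∀ s ∈ outerBoundary G (denseSet G), c s ≠ c u := by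
  classical
  set m := mDegree G with hmdef
  have hrfin : (Set.range c).Finite := Set.finite_range c
  have hm' : (Set.range c).ncard = m := hm
  have hm1 : 1 ≤ m := by
    have h0 : 0 < (denseSet G).ncard := (Set.ncard_pos (Set.toFinite _)).2 ⟨u, hu⟩
    have h1 := ht.1
    omega
  -- every b-vertex is dense
  have hAdense : ∀ v, IsBVertex G c v → v ∈ denseSet G := by
    intro v hv
    have hcv : c v ∈ Set.range c := ⟨v, rfl⟩
    set S : Set ℕ := Set.range c \ {c v} with hS
    have hSn : S.ncard = m - 1 := by
      rw [hS, Set.ncard_diff_singleton_of_mem hcv, hm']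
    let f : ℕ → V := fun j => if h : ∃ w, G.Adj v w ∧ c w = j then h.choose else v
    have hfspec : ∀ j ∈ S, G.Adj v (f j) ∧ c (f j) = j := by
      intro j hj
      have hex : ∃ w, G.Adj v w ∧ c w = j := hv j hj.1 hj.2
      simp only [f, dif_pos hex]
      exact hex.choose_spec
    have hmaps : ∀ j ∈ S, f j ∈ G.neighborSet v := fun j hj => (hfspec j hj).1
    have hinj : Set.InjOn f S := by
      intro a ha b hb hab
      rw [← (hfspec a ha).2, ← (hfspec b hb).2, hab]
    have hle : S.ncard ≤ (G.neighborSet v).ncard :=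
      Set.ncard_le_ncard_of_injOn f hmaps hinj (Set.toFinite _)
    have : m - 1 ≤ (G.neighborSet v).ncard := hSn ▸ hle
    show m ≤ (G.neighborSet v).ncard + 1
    omega
  -- every dense vertex is a b-vertex
  have hCdense : ∀ t ∈ denseSet G, IsBVertex G c t := by
    let g : ℕ → V := fun j =>
      if h : ∃ v, c v = j ∧ IsBVertex G c v then h.choose else u
    have hgspec : ∀ j ∈ Set.range c, c (g j) = j ∧ IsBVertex G c (g j) := by
      intro j hj
      have hex : ∃ v, c v = j ∧ IsBVertex G c v := hb.2 j hj
      simp only [g, dif_pos hex]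
      exact hex.choose_spec
    have hsub : g '' Set.range c ⊆ denseSet G := by
      rintro _ ⟨j, hj, rfl⟩
      exact hAdense _ (hgspec j hj).2
    have hginj : Set.InjOn g (Set.range c) := by
      intro a ha b hb' hab
      rw [← (hgspec a ha).1, ← (hgspec b hb').1, hab]
    have hcard : (g '' Set.range c).ncard = (denseSet G).ncard := by
      rw [Set.ncard_image_of_injOn hginj, ht.1]
      exact hm'
    have heq : g '' Set.range c = denseSet G :=
      Set.eq_of_subset_of_ncard_le hsub hcard.ge (Set.toFinite _)
    intro t htd
    obtain ⟨j, hj, hgj⟩ := heq.ge htd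
    exact hgj ▸ (hgspec j hj).2
  rintro s ⟨hsT, t, htT, hst⟩ hcs
  by_cases hts : t = u
  · subst hts
    exact hb.1 s t hst hcs
  · -- t is a dense b-vertex with degree m-1; c is injective on N(t)
    have htb : IsBVertex G c t := hCdense t htT
    have hut : G.Adj t u := (hdom t htT hts).symm
    have hstn : s ∈ G.neighborSet t := hst.symm
    have hun : u ∈ G.neighborSet t := hut
    have himg : c '' G.neighborSet t = Set.range c \ {c t} := by
      apply Set.Subset.antisymm
      · rintro _ ⟨w, hw, rfl⟩
        exact ⟨⟨w, rfl⟩, fun h => hb.1 t w hw h.symm⟩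
      · rintro j ⟨hjr, hjt⟩
        obtain ⟨w, hw, hcw⟩ := htb j hjr hjt
        exact ⟨w, hw, hcw⟩
    have hct : c t ∈ Set.range c := ⟨t, rfl⟩
    have hcard2 : (c '' G.neighborSet t).ncard = (G.neighborSet t).ncard := by
      rw [himg, Set.ncard_diff_singleton_of_mem hct, hm', ht.2 t htT]
    have hinjN : Set.InjOn c (G.neighborSet t) :=
      Set.injOn_of_ncard_image_eq hcard2 (Set.toFinite _)
    have hsu : s = u := hinjN hstn hun (hcs)
    exact hsT (hsu ▸ hu)
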